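/- For any 0 < c < k ≤ d, there exists a d-variate multilinear polynomial of degree at most k·d^{1−c/k} and weight at most d^{O(c)} (up to 2^{O(k)} factors) that exactly computes OR_d on all inputs of Hamming weight at most k, obtained by composing a degree-k interpolating polynomial for the outer OR on k blocks with exact low-weight inner OR polynomials. -/

import Mathlib

open Classical in
/-- Degree of a multilinear polynomial given by its coefficient vector. -/
noncomputable def polyDegree {ι : Type*} [Fintype ι] (c : Finset ι → ℝ) : ℕ :=
  Finset.sup (Finset.univ.filter fun S => c S ≠ 0) Finset.card

/-- Evaluation of a multilinear polynomial given by its coefficient vector. -/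
noncomputable def evalPoly {ι : Type*} [Fintype ι] (c : Finset ι → ℝ) (x : ι → ℝ) : ℝ :=
  ∑ S : Finset ι, c S * ∏ i ∈ S, x i

/-- Weight (L1-norm of the coefficient vector) of a multilinear polynomial. -/
noncomputable def weight {ι : Type*} [Fintype ι] (c : Finset ι → ℝ) : ℝ :=
  ∑ S : Finset ι, |c S|

open Classical in
/-- The OR function on `{-1,1}^d`, with `-1` = TRUE. -/
noncomputable def ORd {d : ℕ} (x : Fin d → ℝ) : ℝ :=
  if ∃ i, x i = -1 then -1 else 1

/-- The Boolean cube `{-1,1}^d` inside `ℝ^d`. -/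
def cube (d : ℕ) : Set (Fin d → ℝ) := {x | ∀ i, x i = 1 ∨ x i = -1}

open Classical in
/-- Hamming weight: number of coordinates equal to `-1`. -/
noncomputable def hamming {d : ℕ} (x : Fin d → ℝ) : ℕ :=
  (Finset.univ.filter fun i => x i = -1).card

section Algebra
open Finset
open scoped symmDiff

variable {ι : Type*} [Fintype ι] [DecidableEq ι]

lemma polyDegree_le' (p : Finset ι → ℝ) (n : ℕ)
    (h : ∀ S : Finset ι, p S ≠ 0 → S.card ≤ n) : polyDegree p ≤ n := by
  refine Finset.sup_le fun S hS => h S ?_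
  simp only [Finset.mem_filter] at hS
  exact hS.2

noncomputable def cmul (p q : Finset ι → ℝ) : Finset ι → ℝ :=
  fun S => ∑ A : Finset ι, p A * q (S ∆ A)

open Classical in
noncomputable def deltaE (ι : Type*) [Fintype ι] : Finset ι → ℝ :=
  fun S => if S = ∅ then 1 else 0

lemma card_symmDiff_le (A B : Finset ι) : (A ∆ B).card ≤ A.card + B.card := by
  rw [symmDiff_def, Finset.sup_eq_union]
  exact (Finset.card_union_le _ _).trans
    (add_le_add (Finset.card_le_card Finset.sdiff_subset) (Finset.card_le_card Finset.sdiff_subset))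

lemma prod_symmDiff_cube (x : ι → ℝ) (hx : ∀ i, x i = 1 ∨ x i = -1) (A B : Finset ι) :
    ∏ i ∈ A ∆ B, x i = (∏ i ∈ A, x i) * ∏ i ∈ B, x i := by
  have h1 : ∀ C D : Finset ι, (∏ i ∈ C \ D, x i) * ∏ i ∈ C ∩ D, x i = ∏ i ∈ C, x i := by
    intro C D
    rw [← Finset.sdiff_inter_self_left C D]
    exact Finset.prod_sdiff Finset.inter_subset_left
  have hsd : ∏ i ∈ A ∆ B, x i = (∏ i ∈ A \ B, x i) * ∏ i ∈ B \ A, x i := by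
    rw [symmDiff_def, Finset.sup_eq_union]
    exact Finset.prod_union disjoint_sdiff_sdiff
  have hsq : (∏ i ∈ A ∩ B, x i) * ∏ i ∈ A ∩ B, x i = 1 := by
    rw [← Finset.prod_mul_distrib]
    refine Finset.prod_eq_one fun i _ => ?_
    rcases hx i with h | h <;> rw [h] <;> ring
  calc ∏ i ∈ A ∆ B, x i
      = ((∏ i ∈ A ∆ B, x i) * ((∏ i ∈ A ∩ B, x i) * ∏ i ∈ A ∩ B, x i)) := by
        rw [hsq, mul_one]
    _ = ((∏ i ∈ A \ B, x i) * ∏ i ∈ A ∩ B, x i) *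
        ((∏ i ∈ B \ A, x i) * ∏ i ∈ B ∩ A, x i) := by
        rw [hsd, Finset.inter_comm B A]; ring
    _ = (∏ i ∈ A, x i) * ∏ i ∈ B, x i := by rw [h1 A B, h1 B A]

lemma symmDiff_bijective (A : Finset ι) :
    Function.Bijective (fun B : Finset ι => B ∆ A) :=
  Function.Involutive.bijective fun B => symmDiff_symmDiff_cancel_right A B

lemma eval_cmul (p q : Finset ι → ℝ) (x : ι → ℝ) (hx : ∀ i, x i = 1 ∨ x i = -1) :
    evalPoly (cmul p q) x = evalPoly p x * evalPoly q x := by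
  unfold evalPoly cmul
  calc ∑ S : Finset ι, (∑ A : Finset ι, p A * q (S ∆ A)) * ∏ i ∈ S, x i
      = ∑ S : Finset ι, ∑ A : Finset ι, p A * q (S ∆ A) * ∏ i ∈ S, x i := by
        simp [Finset.sum_mul]
    _ = ∑ A : Finset ι, ∑ S : Finset ι, p A * q (S ∆ A) * ∏ i ∈ S, x i := Finset.sum_comm
    _ = ∑ A : Finset ι, ∑ B : Finset ι, (p A * ∏ i ∈ A, x i) * (q B * ∏ i ∈ B, x i) := by
        refine Finset.sum_congr rfl fun A _ => ?_
        refine (Fintype.sum_bijective _ (symmDiff_bijective A) _ _ fun B => ?_).symm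
        rw [symmDiff_symmDiff_cancel_right, prod_symmDiff_cube x hx]
        ring
    _ = (∑ A : Finset ι, p A * ∏ i ∈ A, x i) * ∑ B : Finset ι, q B * ∏ i ∈ B, x i := by
        rw [Finset.sum_mul_sum]

lemma weight_nonneg (p : Finset ι → ℝ) : 0 ≤ weight p :=
  Finset.sum_nonneg fun _ _ => abs_nonneg _

lemma weight_cmul_le (p q : Finset ι → ℝ) : weight (cmul p q) ≤ weight p * weight q := by
  unfold weight cmul
  calc ∑ S : Finset ι, |∑ A : Finset ι, p A * q (S ∆ A)|
      ≤ ∑ S : Finset ι, ∑ A : Finset ι, |p A| * |q (S ∆ A)| := by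
        refine Finset.sum_le_sum fun S _ => ?_
        refine (Finset.abs_sum_le_sum_abs _ _).trans ?_
        refine Finset.sum_le_sum fun A _ => ?_
        rw [abs_mul]
    _ = ∑ A : Finset ι, ∑ S : Finset ι, |p A| * |q (S ∆ A)| := Finset.sum_comm
    _ = ∑ A : Finset ι, |p A| * ∑ S : Finset ι, |q S| := by
        refine Finset.sum_congr rfl fun A _ => ?_
        rw [← Finset.mul_sum]
        congr 1
        exact Fintype.sum_bijective _ (symmDiff_bijective A) _ _ fun B => rfl
    _ = (∑ A : Finset ι, |p A|) * ∑ S : Finset ι, |q S| := by rw [← Finset.sum_mul]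

lemma cmul_support (p q : Finset ι → ℝ) (m n : ℕ)
    (hp : ∀ S, p S ≠ 0 → S.card ≤ m) (hq : ∀ S, q S ≠ 0 → S.card ≤ n) :
    ∀ S, cmul p q S ≠ 0 → S.card ≤ m + n := by
  intro S hS
  by_contra hc
  push_neg at hc
  apply hS
  refine Finset.sum_eq_zero fun A _ => ?_
  rcases eq_or_ne (p A) 0 with h | h
  · rw [h, zero_mul]
  rcases eq_or_ne (q (S ∆ A)) 0 with h2 | h2
  · rw [h2, mul_zero]
  exfalso
  have hA := hp A h
  have hB := hq _ h2
  have hS' : S = (S ∆ A) ∆ A := (symmDiff_symmDiff_cancel_right A S).symm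
  have hle := card_symmDiff_le (S ∆ A) A
  rw [← hS'] at hle
  omega

lemma eval_deltaE (x : ι → ℝ) : evalPoly (deltaE ι) x = 1 := by
  unfold evalPoly deltaE
  rw [Finset.sum_eq_single (∅ : Finset ι)]
  · simp
  · intro S _ hS; simp [hS]
  · simp

end Algebra

section Construction
open Finset
open scoped symmDiff

variable {ι : Type*} [Fintype ι] [DecidableEq ι]

open Classical in
noncomputable def eB (B : Finset ι) : Finset ι → ℝ :=
  fun S => if S ⊆ B then 1 else 0

noncomputable def indB (B : Finset ι) : Finset ι → ℝ :=
  fun S => deltaE ι S - (2:ℝ)⁻¹ ^ B.card * eB B S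

omit [DecidableEq ι] in
lemma eval_smul_sub (p q : Finset ι → ℝ) (a : ℝ) (x : ι → ℝ) :
    evalPoly (fun S => a * p S - q S) x = a * evalPoly p x - evalPoly q x := by
  unfold evalPoly
  rw [Finset.mul_sum, ← Finset.sum_sub_distrib]
  exact Finset.sum_congr rfl fun S _ => by ring

omit [DecidableEq ι] in
lemma eval_sub_smul (p q : Finset ι → ℝ) (a : ℝ) (x : ι → ℝ) :
    evalPoly (fun S => p S - a * q S) x = evalPoly p x - a * evalPoly q x := by
  unfold evalPoly
  rw [Finset.mul_sum, ← Finset.sum_sub_distrib]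
  exact Finset.sum_congr rfl fun S _ => by ring

omit [DecidableEq ι] in
lemma weight_sub_smul_le (p q : Finset ι → ℝ) (a : ℝ) :
    weight (fun S => p S - a * q S) ≤ weight p + |a| * weight q := by
  unfold weight
  rw [Finset.mul_sum, ← Finset.sum_add_distrib]
  refine Finset.sum_le_sum fun S _ => ?_
  show |p S - a * q S| ≤ |p S| + |a| * |q S|
  rw [sub_eq_add_neg]
  refine (abs_add_le _ _).trans ?_
  rw [abs_neg, abs_mul]

omit [DecidableEq ι] in
lemma weight_smul_sub_le (p q : Finset ι → ℝ) (a : ℝ) :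
    weight (fun S => a * p S - q S) ≤ |a| * weight p + weight q := by
  unfold weight
  rw [Finset.mul_sum, ← Finset.sum_add_distrib]
  refine Finset.sum_le_sum fun S _ => ?_
  show |a * p S - q S| ≤ |a| * |p S| + |q S|
  rw [sub_eq_add_neg]
  refine (abs_add_le _ _).trans ?_
  rw [abs_neg, abs_mul]

omit [DecidableEq ι] in
lemma weight_deltaE : weight (deltaE ι) = 1 := by
  unfold weight deltaE
  rw [Finset.sum_eq_single (∅ : Finset ι)]
  · simp
  · intro S _ hS; simp [hS]
  · simp

lemma eval_eB (B : Finset ι) (x : ι → ℝ) :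
    evalPoly (eB B) x = ∏ i ∈ B, (x i + 1) := by
  unfold evalPoly eB
  have key : ∀ S : Finset ι, (if S ⊆ B then (1:ℝ) else 0) * ∏ i ∈ S, x i
      = if S ∈ B.powerset then (∏ i ∈ S, x i) else 0 := by
    intro S; by_cases h : S ⊆ B <;> simp [h, Finset.mem_powerset]
  rw [Finset.sum_congr rfl fun S _ => key S, Finset.sum_ite_mem, Finset.univ_inter,
    Finset.prod_add]
  simp

lemma weight_eB (B : Finset ι) : weight (eB B) = 2 ^ B.card := by
  unfold weight eB
  have key : ∀ S : Finset ι, |if S ⊆ B then (1:ℝ) else 0|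
      = if S ∈ B.powerset then (1:ℝ) else 0 := by
    intro S; by_cases h : S ⊆ B <;> simp [h, Finset.mem_powerset]
  rw [Finset.sum_congr rfl fun S _ => key S, Finset.sum_ite_mem, Finset.univ_inter,
    Finset.sum_const, Finset.card_powerset]
  simp

lemma eval_indB (B : Finset ι) (x : ι → ℝ) (hx : ∀ i, x i = 1 ∨ x i = -1) :
    evalPoly (indB B) x = if ∃ i ∈ B, x i = -1 then 1 else 0 := by
  unfold indB
  rw [eval_sub_smul, eval_deltaE, eval_eB]
  by_cases h : ∃ i ∈ B, x i = -1
  · obtain ⟨i, hi, hxi⟩ := h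
    rw [if_pos ⟨i, hi, hxi⟩, Finset.prod_eq_zero hi (by rw [hxi]; ring)]
    ring
  · rw [if_neg h]
    have hall : ∀ i ∈ B, x i + 1 = 2 := by
      intro i hi
      rcases hx i with h1 | h1
      · rw [h1]; norm_num
      · exact absurd ⟨i, hi, h1⟩ h
    rw [Finset.prod_congr rfl hall, Finset.prod_const, ← mul_pow]
    norm_num

lemma weight_indB (B : Finset ι) : weight (indB B) ≤ 2 := by
  unfold indB
  refine (weight_sub_smul_le _ _ _).trans ?_
  rw [weight_deltaE, weight_eB, abs_of_nonneg (by positivity), ← mul_pow]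
  norm_num

lemma support_indB (B : Finset ι) : ∀ S, indB B S ≠ 0 → S.card ≤ B.card := by
  intro S hS
  by_contra hc
  apply hS
  unfold indB deltaE eB
  have h1 : S ≠ ∅ := by
    rintro rfl
    exact hc (by simp)
  have h2 : ¬ S ⊆ B := fun h => hc (Finset.card_le_card h)
  rw [if_neg h1, if_neg h2]
  ring

omit [DecidableEq ι] in
lemma eval_sum {τ : Type*} (J : Finset τ) (f : τ → Finset ι → ℝ) (x : ι → ℝ) :
    evalPoly (fun S => ∑ j ∈ J, f j S) x = ∑ j ∈ J, evalPoly (f j) x := by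
  unfold evalPoly
  simp only [Finset.sum_mul]
  exact Finset.sum_comm

omit [DecidableEq ι] in
lemma weight_sum_le {τ : Type*} (J : Finset τ) (f : τ → Finset ι → ℝ) :
    weight (fun S => ∑ j ∈ J, f j S) ≤ ∑ j ∈ J, weight (f j) := by
  unfold weight
  calc ∑ S : Finset ι, |∑ j ∈ J, f j S|
      ≤ ∑ S : Finset ι, ∑ j ∈ J, |f j S| :=
        Finset.sum_le_sum fun S _ => Finset.abs_sum_le_sum_abs _ _
    _ = ∑ j ∈ J, ∑ S : Finset ι, |f j S| := Finset.sum_comm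

def blockB (d b j : ℕ) : Finset (Fin d) :=
  Finset.univ.filter fun i : Fin d => i.1 / b = j

def blockJ (d b : ℕ) : Finset ℕ :=
  Finset.image (fun i : Fin d => i.1 / b) Finset.univ

noncomputable def sPoly (d b : ℕ) : Finset (Fin d) → ℝ :=
  fun S => ∑ j ∈ blockJ d b, indB (blockB d b j) S

lemma card_blockB (d b j : ℕ) (hb : 0 < b) : (blockB d b j).card ≤ b := by
  have h : (blockB d b j).card ≤ (Finset.Ico (j*b) (j*b+b)).card := by
    refine Finset.card_le_card_of_injOn (fun i => i.1) ?_ ?_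
    · intro i hi
      simp only [blockB, Finset.mem_coe, Finset.mem_filter, Finset.mem_univ, true_and] at hi
      simp only [Finset.mem_coe, Finset.mem_Ico]
      refine ⟨?_, ?_⟩
      · show j * b ≤ i.1
        calc j*b = (i.1/b)*b := by rw [hi]
          _ ≤ i.1 := Nat.div_mul_le_self _ _
      · show i.1 < j * b + b
        have h2 : i.1 / b < j+1 := by omega
        have h3 := (Nat.div_lt_iff_lt_mul hb).mp h2
        have h4 : (j+1)*b = j*b + b := by ring
        omega
    · intro i _ i' _ h; exact Fin.ext h
  simpa using h

lemma support_sPoly (d b : ℕ) (hb : 0 < b) : ∀ S, sPoly d b S ≠ 0 → S.card ≤ b := by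
  intro S hS
  by_contra hc
  apply hS
  refine Finset.sum_eq_zero fun j _ => ?_
  by_contra h0
  exact hc ((support_indB _ S h0).trans (card_blockB d b j hb))

noncomputable def Pk (d b : ℕ) : ℕ → (Finset (Fin d) → ℝ)
  | 0 => deltaE (Fin d)
  | n+1 => cmul (fun S => deltaE (Fin d) S - ((n:ℝ)+1)⁻¹ * sPoly d b S) (Pk d b n)

lemma eval_Pk (d b n : ℕ) (x : Fin d → ℝ) (hx : ∀ i, x i = 1 ∨ x i = -1) :
    evalPoly (Pk d b n) x
      = ∏ t ∈ Finset.range n, (1 - ((t:ℝ)+1)⁻¹ * evalPoly (sPoly d b) x) := by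
  induction n with
  | zero => simp [Pk, eval_deltaE]
  | succ n ih =>
    rw [Pk, eval_cmul _ _ _ hx, eval_sub_smul, eval_deltaE, ih, Finset.prod_range_succ]
    ring

lemma weight_Pk (d b n : ℕ) :
    weight (Pk d b n) ≤ (1 + weight (sPoly d b)) ^ n := by
  have hw : 0 ≤ weight (sPoly d b) := weight_nonneg _
  induction n with
  | zero => simp [Pk, weight_deltaE]
  | succ n ih =>
    rw [Pk, pow_succ]
    refine (weight_cmul_le _ _).trans ?_
    have h1 : weight (fun S => deltaE (Fin d) S - ((n:ℝ)+1)⁻¹ * sPoly d b S)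
        ≤ 1 + weight (sPoly d b) := by
      refine (weight_sub_smul_le _ _ _).trans ?_
      rw [weight_deltaE]
      have : |((n:ℝ)+1)⁻¹| ≤ 1 := by
        rw [abs_of_nonneg (by positivity)]
        rw [inv_le_one_iff₀]
        right; linarith [Nat.cast_nonneg (α := ℝ) n]
      nlinarith [weight_nonneg (sPoly d b)]
    calc weight (fun S => deltaE (Fin d) S - ((n:ℝ)+1)⁻¹ * sPoly d b S) * weight (Pk d b n)
        ≤ (1 + weight (sPoly d b)) * (1 + weight (sPoly d b)) ^ n := by
          refine mul_le_mul h1 ih (weight_nonneg _) (by linarith)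
      _ = (1 + weight (sPoly d b)) ^ n * (1 + weight (sPoly d b)) := by ring
    
lemma support_Pk (d b n : ℕ) (hb : 0 < b) :
    ∀ S, Pk d b n S ≠ 0 → S.card ≤ n * b := by
  induction n with
  | zero =>
    intro S hS
    rw [Pk] at hS
    unfold deltaE at hS
    have : S = ∅ := by by_contra h; rw [if_neg h] at hS; exact hS rfl
    simp [this]
  | succ n ih =>
    intro S hS
    rw [Pk] at hS
    have := cmul_support _ _ b (n*b) ?_ ih S hS
    · have h4 : (n+1)*b = b + n*b := by ring
      omega
    intro T hT
    by_cases hT0 : T = ∅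
    · simp [hT0]
    have hs : sPoly d b T ≠ 0 := by
      intro h0
      apply hT
      unfold deltaE
      rw [if_neg hT0, h0]
      ring
    exact support_sPoly d b hb T hs

end Construction

open Classical in
noncomputable def trueBlocks (d b : ℕ) (x : Fin d → ℝ) : Finset ℕ :=
  (blockJ d b).filter fun j => ∃ i ∈ blockB d b j, x i = -1

open Classical in
lemma eval_sPoly (d b : ℕ) (x : Fin d → ℝ) (hx : ∀ i, x i = 1 ∨ x i = -1) :
    evalPoly (sPoly d b) x = (trueBlocks d b x).card := by
  unfold sPoly trueBlocks
  rw [eval_sum]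
  rw [Finset.sum_congr rfl fun j _ => eval_indB (blockB d b j) x hx]
  convert (Finset.natCast_card_filter _ _).symm

noncomputable def qPoly (d b k : ℕ) : Finset (Fin d) → ℝ :=
  fun S => 2 * Pk d b k S - deltaE (Fin d) S

lemma trueBlocks_card_le_hamming (d b : ℕ) (x : Fin d → ℝ) :
    (trueBlocks d b x).card ≤ hamming x := by
  classical
  have h : (trueBlocks d b x).card
      ≤ (Finset.univ.filter fun i : Fin d => x i = -1).card := by
    refine Finset.card_le_card_of_surjOn (fun i : Fin d => i.1 / b) ?_
    intro j hj
    simp only [Finset.mem_coe, trueBlocks, Finset.mem_filter] at hj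
    obtain ⟨i, hiB, hxi⟩ := hj.2
    simp only [blockB, Finset.mem_filter, Finset.mem_univ, true_and] at hiB
    exact ⟨i, by simp [hxi], hiB⟩
  refine h.trans ?_
  simp [hamming]

lemma exists_neg_iff_trueBlocks (d b : ℕ) (x : Fin d → ℝ) :
    (∃ i, x i = -1) ↔ (trueBlocks d b x).Nonempty := by
  classical
  constructor
  · rintro ⟨i, hxi⟩
    refine ⟨i.1 / b, ?_⟩
    simp only [trueBlocks, Finset.mem_filter]
    refine ⟨Finset.mem_image_of_mem _ (Finset.mem_univ i), i, ?_, hxi⟩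
    simp [blockB]
  · rintro ⟨j, hj⟩
    simp only [trueBlocks, Finset.mem_filter] at hj
    obtain ⟨i, -, hxi⟩ := hj.2
    exact ⟨i, hxi⟩

lemma prod_interp (k N : ℕ) (hNk : N ≤ k) :
    ∏ t ∈ Finset.range k, (1 - ((t:ℝ)+1)⁻¹ * N) = if N = 0 then 1 else 0 := by
  by_cases hN : N = 0
  · rw [if_pos hN, hN]
    refine Finset.prod_eq_one fun t _ => by simp
  · rw [if_neg hN]
    have hN1 : 1 ≤ N := Nat.one_le_iff_ne_zero.mpr hN
    refine Finset.prod_eq_zero (i := N - 1) (Finset.mem_range.mpr (by omega)) ?_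
    have hc : ((N - 1 : ℕ) : ℝ) + 1 = (N : ℝ) := by
      push_cast [Nat.cast_sub hN1]
      ring
    rw [hc, inv_mul_cancel₀ (by exact_mod_cast hN)]
    ring

theorem stmt_19 : ∃ C > (0 : ℝ), ∀ d k : ℕ, ∀ c' : ℝ, 0 < c' → c' < k → k ≤ d →
    ∃ q : Finset (Fin d) → ℝ,
      (polyDegree q : ℝ) ≤ k * (d : ℝ) ^ (1 - c' / k) ∧
      weight q ≤ 2 ^ (C * k) * (d : ℝ) ^ (C * c') ∧
      ∀ x ∈ cube d, hamming x ≤ k → evalPoly q x = ORd x := by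
  classical
  refine ⟨6, by norm_num, ?_⟩
  intro d k c' hc0 hck hkd
  have hk0 : 0 < k := by exact_mod_cast hc0.trans hck
  have hd0 : 0 < d := lt_of_lt_of_le hk0 hkd
  have hd1R : (1:ℝ) ≤ d := by exact_mod_cast hd0
  have hdpos : (0:ℝ) < d := by positivity
  have hkR : (0:ℝ) < k := by exact_mod_cast hk0
  set α : ℝ := 1 - c' / k with hα
  have hα0 : 0 ≤ α := by
    rw [hα]
    have : c' / k ≤ 1 := by
      rw [div_le_one hkR]
      exact hck.le
    linarith
  set D : ℝ := (d:ℝ) ^ α with hD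
  have hD1 : 1 ≤ D := Real.one_le_rpow hd1R hα0
  set b : ℕ := ⌊D⌋₊ with hbdef
  have hb1 : 1 ≤ b := Nat.le_floor (by exact_mod_cast hD1)
  have hb0 : 0 < b := hb1
  have hbR : (1:ℝ) ≤ b := by exact_mod_cast hb1
  have hbD : (b:ℝ) ≤ D := Nat.floor_le (by positivity)
  have hDb : D ≤ 2 * b := by
    have := Nat.lt_floor_add_one D
    rw [← hbdef] at this
    linarith
  refine ⟨qPoly d b k, ?_, ?_, ?_⟩
  · -- degree bound
    have hsupp : ∀ S, qPoly d b k S ≠ 0 → S.card ≤ k * b := by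
      intro S hS
      by_cases hP : Pk d b k S ≠ 0
      · exact support_Pk d b k hb0 S hP
      push_neg at hP
      have hSe : S = ∅ := by
        by_contra h
        apply hS
        unfold qPoly deltaE
        rw [hP, if_neg h]
        ring
      simp [hSe]
    have hdeg : polyDegree (qPoly d b k) ≤ k * b := polyDegree_le' _ _ hsupp
    calc (polyDegree (qPoly d b k) : ℝ) ≤ ((k * b : ℕ) : ℝ) := by exact_mod_cast hdeg
      _ = (k:ℝ) * b := by push_cast; ring
      _ ≤ (k:ℝ) * D := by nlinarith
  · -- weight bound
    set E : ℝ := (d:ℝ) ^ (c'/k) with hE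
    have hE1 : 1 ≤ E := Real.one_le_rpow hd1R (by positivity)
    have hm : ((blockJ d b).card : ℝ) ≤ 3 * E := by
      have hsub : blockJ d b ⊆ Finset.range ((d-1)/b + 1) := by
        intro j hj
        simp only [blockJ, Finset.mem_image] at hj
        obtain ⟨i, -, rfl⟩ := hj
        have : i.1 / b ≤ (d-1)/b := Nat.div_le_div_right (by omega)
        exact Finset.mem_range.mpr (by omega)
      have h1 : ((blockJ d b).card : ℝ) ≤ (((d-1)/b : ℕ) : ℝ) + 1 := by
        have := Finset.card_le_card hsub
        rw [Finset.card_range] at this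
        exact_mod_cast this
      have h2 : (((d-1)/b : ℕ) : ℝ) ≤ (d:ℝ) / b := by
        refine (Nat.cast_div_le).trans ?_
        gcongr
        exact_mod_cast Nat.sub_le d 1
      have h3 : (d:ℝ) / b ≤ 2 * E := by
        have hD2 : D / 2 ≤ b := by linarith
        have hD2pos : (0:ℝ) < D / 2 := by linarith
        have hdd : (d:ℝ) / b ≤ (d:ℝ) / (D/2) :=
          div_le_div_of_nonneg_left (by positivity) hD2pos hD2
        refine hdd.trans (le_of_eq ?_)
        have hED : E * D = (d:ℝ) := by
          rw [hE, hD, ← Real.rpow_add hdpos]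
          rw [show c'/(k:ℝ) + α = 1 by rw [hα]; ring]
          exact Real.rpow_one _
        have hDne : D ≠ 0 := by
          intro h0
          rw [h0] at hD1
          linarith
        have hDE : (d:ℝ) / D = E := by
          rw [div_eq_iff hDne]
          exact hED.symm
        rw [div_div_eq_mul_div, mul_comm, mul_div_assoc, hDE]
      linarith
    have hw : weight (sPoly d b) ≤ 6 * E := by
      refine (weight_sum_le _ _).trans ?_
      calc ∑ j ∈ blockJ d b, weight (indB (blockB d b j))
          ≤ ∑ _j ∈ blockJ d b, (2:ℝ) := Finset.sum_le_sum fun j _ => weight_indB _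
        _ = 2 * ((blockJ d b).card : ℝ) := by rw [Finset.sum_const]; push_cast; ring
        _ ≤ 6 * E := by linarith
    have hPw : weight (Pk d b k) ≤ (7 * E) ^ k := by
      refine (weight_Pk d b k).trans ?_
      refine pow_le_pow_left₀ ?_ ?_ k
      · have := weight_nonneg (sPoly d b); linarith
      · linarith
    have h1 : weight (qPoly d b k) ≤ |(2:ℝ)| * weight (Pk d b k) + weight (deltaE (Fin d)) :=
      weight_smul_sub_le _ _ _
    rw [weight_deltaE, abs_of_nonneg (by norm_num : (0:ℝ) ≤ 2)] at h1
    have h2 : (1:ℝ) ≤ (7 * E) ^ k := one_le_pow₀ (by linarith)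
    have hqw : weight (qPoly d b k) ≤ 3 * (7 * E) ^ k := by linarith
    have hEk : E ^ k = (d:ℝ) ^ c' := by
      rw [hE, ← Real.rpow_natCast ((d:ℝ) ^ (c'/k)) k, ← Real.rpow_mul hdpos.le]
      congr 1
      field_simp
    have h9 : (3:ℝ) ≤ 9 ^ k :=
      le_trans (by norm_num) (le_self_pow₀ (by norm_num) (by omega))
    have h37 : (3:ℝ) * 7 ^ k ≤ 64 ^ k := by
      calc (3:ℝ) * 7 ^ k ≤ 9 ^ k * 7 ^ k :=
            mul_le_mul_of_nonneg_right h9 (by positivity)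
        _ = 63 ^ k := by rw [← mul_pow]; norm_num
        _ ≤ 64 ^ k := pow_le_pow_left₀ (by norm_num) (by norm_num) k
    have h2k : (2:ℝ) ^ ((6:ℝ) * k) = 64 ^ k := by
      rw [show ((6:ℝ) * k) = ((6 * k : ℕ) : ℝ) by push_cast; ring, Real.rpow_natCast, pow_mul]
      norm_num
    have hdc : (d:ℝ) ^ c' ≤ (d:ℝ) ^ ((6:ℝ) * c') :=
      Real.rpow_le_rpow_of_exponent_le hd1R (by linarith)
    calc weight (qPoly d b k) ≤ 3 * (7 * E) ^ k := hqw
      _ = (3 * 7 ^ k) * E ^ k := by rw [mul_pow]; ring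
      _ = (3 * 7 ^ k) * (d:ℝ) ^ c' := by rw [hEk]
      _ ≤ 64 ^ k * (d:ℝ) ^ ((6:ℝ) * c') := by
          have hd0' : (0:ℝ) ≤ (d:ℝ) ^ c' := (Real.rpow_pos_of_pos hdpos c').le
          exact mul_le_mul h37 hdc hd0' (by positivity)
      _ = 2 ^ ((6:ℝ) * k) * (d:ℝ) ^ ((6:ℝ) * c') := by rw [h2k]
  · -- correctness
    intro x hx hham
    have hxc : ∀ i, x i = 1 ∨ x i = -1 := hx
    set N : ℕ := (trueBlocks d b x).card with hN
    have hNk : N ≤ k := (trueBlocks_card_le_hamming d b x).trans hham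
    have hqe : evalPoly (qPoly d b k) x
        = 2 * ∏ t ∈ Finset.range k, (1 - ((t:ℝ)+1)⁻¹ * N) - 1 := by
      unfold qPoly
      rw [eval_smul_sub, eval_deltaE, eval_Pk d b k x hxc, eval_sPoly d b x hxc]
    rw [hqe, prod_interp k N hNk]
    by_cases hex : ∃ i, x i = -1
    · have hN0 : N ≠ 0 := by
        have hne := (exists_neg_iff_trueBlocks d b x).mp hex
        rw [hN]
        exact Finset.card_ne_zero_of_mem hne.choose_spec
      rw [if_neg hN0]
      norm_num [ORd, hex]
    · have hN0 : N = 0 := by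
        rw [hN, Finset.card_eq_zero, ← Finset.not_nonempty_iff_eq_empty]
        exact fun hne => hex ((exists_neg_iff_trueBlocks d b x).mpr hne)
      rw [if_pos hN0]
      norm_num [ORd, hex]
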